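/- Let k ≥ 1 and r ≥ 0 be integers and Q₁, …, Q_k ∈ ℂ[z] polynomials with deg Qᵢ ≤ i + r for 1 ≤ i ≤ k and deg Q_k = k + r. There exist a natural number N₀ and a real number R₀ > 0 such that for all n ≥ N₀ the following holds: if V ∈ ℂ[z] with deg V ≤ r and a nonzero polynomial S ∈ ℂ[z] of degree exactly n satisfy Σ_{i=1}^k Qᵢ·S^{(i)} + V·S = 0, then every root of V and every root of S has modulus at most R₀. -/

import Mathlib

open Polynomial

set_option maxHeartbeats 1000000

noncomputable def Complex.abs : AbsoluteValue ℂ ℝ := IsAbsoluteValue.toAbsoluteValue (norm : ℂ → ℝ)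

lemma Complex.re_le_abs (z : ℂ) : z.re ≤ Complex.abs z := Complex.re_le_norm z

lemma Complex.sq_abs (z : ℂ) : Complex.abs z ^ 2 = Complex.normSq z := Complex.sq_norm z

private lemma re_half {u : ℂ} (h1 : Complex.abs u ≤ 1) (h2 : u ≠ 1) :
    (1/2 : ℝ) ≤ ((1 - u)⁻¹).re := by
  have hne : (1 : ℂ) - u ≠ 0 := sub_ne_zero.mpr (Ne.symm h2)
  have hre : u.re < 1 := by
    rcases lt_or_eq_of_le (le_trans (Complex.re_le_abs u) h1) with h | h
    · exact h
    · exfalso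
      apply h2
      have habs : Complex.abs u = 1 := le_antisymm h1 (by rw [← h]; exact Complex.re_le_abs u)
      have hnsq : Complex.normSq u = 1 := by
        have := Complex.sq_abs u
        rw [habs] at this; simpa using this.symm
      have him : u.im = 0 := by
        have : u.re ^ 2 + u.im ^ 2 = 1 := by
          rw [← hnsq]; simp [Complex.normSq_apply]; ring
        nlinarith [sq_nonneg u.im]
      apply Complex.ext <;> simp [h.symm, him]
  have hnsq : Complex.normSq (1 - u) ≤ 2 * (1 - u).re := by
    have h1' : Complex.normSq u ≤ 1 := by
      have := Complex.sq_abs u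
      nlinarith [Complex.abs.nonneg u]
    have : Complex.normSq (1 - u) = 1 - 2 * u.re + Complex.normSq u := by
      simp [Complex.normSq_apply, Complex.sub_re, Complex.sub_im]; ring
    rw [this]
    simp [Complex.sub_re]
    nlinarith
  have hpos : 0 < (1 - u).re := by simp [Complex.sub_re]; linarith
  have hnsqpos : 0 < Complex.normSq (1 - u) := Complex.normSq_pos.mpr hne
  rw [Complex.inv_re, le_div_iff₀ hnsqpos]
  linarith

private lemma re_term {w a : ℂ} (hw : w ≠ 0) (ha : Complex.abs a ≤ Complex.abs w) (hne : a ≠ w) :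
    (1/2 : ℝ) ≤ (w / (w - a)).re := by
  have hwa : w - a ≠ 0 := sub_ne_zero.mpr (Ne.symm hne)
  have h1 : w / (w - a) = (1 - a / w)⁻¹ := by
    rw [inv_eq_one_div]
    rw [div_eq_div_iff hwa (by field_simp; exact div_ne_zero hwa hw)]
    field_simp
  rw [h1]
  apply re_half
  · rw [map_div₀, div_le_one (by simpa using Complex.abs.pos hw)]
    exact ha
  · intro h
    apply hne
    rwa [div_eq_one_iff_eq hw] at h

private lemma re_sum (w : ℂ) (hw : w ≠ 0) (m : Multiset ℂ)
    (hm : ∀ ζ ∈ m, Complex.abs ζ ≤ Complex.abs w ∧ ζ ≠ w) :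
    eval w (m.map fun ζ => X - C ζ).prod ≠ 0 ∧
      ((Multiset.card m : ℝ)/2) ≤
        (w * eval w (derivative (m.map fun ζ => X - C ζ).prod) /
          eval w (m.map fun ζ => X - C ζ).prod).re := by
  induction m using Multiset.induction_on with
  | empty => simp
  | cons a s ih =>
    obtain ⟨hev, hre⟩ := ih (fun ζ hζ => hm ζ (Multiset.mem_cons_of_mem hζ))
    obtain ⟨haw, hane⟩ := hm a (Multiset.mem_cons_self a s)
    set M := (s.map fun ζ => X - C ζ).prod with hM
    have hwa : w - a ≠ 0 := sub_ne_zero.mpr (Ne.symm hane)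
    have hprod : ((a ::ₘ s).map fun ζ => X - C ζ).prod = (X - C a) * M := by
      rw [Multiset.map_cons, Multiset.prod_cons]
    rw [hprod]
    have hevP : eval w ((X - C a) * M) = (w - a) * eval w M := by simp
    constructor
    · rw [hevP]; exact mul_ne_zero hwa hev
    · have hder : derivative ((X - C a) * M) = M + (X - C a) * derivative M := by
        rw [derivative_mul]; simp
      have hsplit : w * eval w (derivative ((X - C a) * M)) / eval w ((X - C a) * M)
          = w / (w - a) + w * eval w (derivative M) / eval w M := by
        rw [hder, hevP]
        simp only [eval_add, eval_mul, eval_sub, eval_X, eval_C]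
        field_simp
      rw [hsplit, Complex.add_re]
      have h2 := re_term hw haw hane
      simp only [Multiset.card_cons]
      push_cast
      linarith

private lemma ratio {P : Polynomial ℂ} (hP : P ≠ 0) {w : ℂ} (hw : w ≠ 0)
    (hr : ∀ z ∈ P.roots, Complex.abs z ≤ Complex.abs w) (hew : eval w P ≠ 0) :
    (P.natDegree : ℝ)/(2*Complex.abs w) * Complex.abs (eval w P)
      ≤ Complex.abs (eval w (derivative P)) := by
  have hsplit : Splits P := IsAlgClosed.splits P
  have hfact : P = C P.leadingCoeff * (P.roots.map fun a => X - C a).prod :=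
    hsplit.eq_prod_roots
  have hcard : Multiset.card P.roots = P.natDegree := (splits_iff_card_roots.mp hsplit)
  have hm : ∀ ζ ∈ P.roots, Complex.abs ζ ≤ Complex.abs w ∧ ζ ≠ w := by
    intro ζ hζ
    refine ⟨hr ζ hζ, ?_⟩
    rintro rfl
    exact hew ((mem_roots'.mp hζ).2)
  obtain ⟨hne, hre⟩ := re_sum w hw P.roots hm
  set M := (P.roots.map fun a => X - C a).prod with hMdef
  have e1 : eval w P = P.leadingCoeff * eval w M := by
    conv_lhs => rw [hfact]
    simp
  have e2 : eval w (derivative P) = P.leadingCoeff * eval w (derivative M) := by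
    conv_lhs => rw [hfact]
    rw [derivative_mul, derivative_C]
    simp
  rw [hcard] at hre
  have habs : (P.natDegree : ℝ)/2 ≤
      Complex.abs w * Complex.abs (eval w (derivative M)) / Complex.abs (eval w M) := by
    calc (P.natDegree : ℝ)/2 ≤ (w * eval w (derivative M) / eval w M).re := hre
    _ ≤ Complex.abs (w * eval w (derivative M) / eval w M) := Complex.re_le_abs _
    _ = Complex.abs w * Complex.abs (eval w (derivative M)) / Complex.abs (eval w M) := by
        rw [map_div₀, map_mul]
  have hMpos : 0 < Complex.abs (eval w M) := Complex.abs.pos hne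
  have hwpos : 0 < Complex.abs w := Complex.abs.pos hw
  rw [div_le_div_iff₀ two_pos hMpos] at habs
  rw [e1, e2, map_mul, map_mul]
  have hL : 0 ≤ Complex.abs P.leadingCoeff := Complex.abs.nonneg _
  rw [div_mul_eq_mul_div, div_le_iff₀ (by positivity)]
  nlinarith [mul_le_mul_of_nonneg_left habs hL]

private lemma roots_deriv_bound {P : Polynomial ℂ} {c : ℝ} (hc : 0 ≤ c)
    (h : ∀ z ∈ P.roots, Complex.abs z ≤ c) :
    ∀ z ∈ (derivative P).roots, Complex.abs z ≤ c := by
  intro z hz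
  by_contra hlt
  push_neg at hlt
  have hP0 : derivative P ≠ 0 := (mem_roots'.mp hz).1
  have hP : P ≠ 0 := by rintro rfl; simp at hP0
  have hz0 : z ≠ 0 := by
    rintro rfl
    simp at hlt
    linarith
  have hez : eval z P ≠ 0 := by
    intro he
    exact absurd (h z (mem_roots'.mpr ⟨hP, he⟩)) (not_le.mpr hlt)
  have hd : P.natDegree ≠ 0 := by
    intro h0
    rw [eq_C_of_natDegree_eq_zero h0] at hP0
    simp at hP0
  have hrr : ∀ ζ ∈ P.roots, Complex.abs ζ ≤ Complex.abs z :=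
    fun ζ hζ => (h ζ hζ).trans hlt.le
  have := ratio hP hz0 hrr hez
  rw [(mem_roots'.mp hz).2] at this
  simp only [map_zero] at this
  have h1 : 0 < (P.natDegree : ℝ)/(2*Complex.abs z) * Complex.abs (eval z P) := by
    have := Complex.abs.pos hez
    have := Complex.abs.pos hz0
    have : (0:ℝ) < P.natDegree := by exact_mod_cast Nat.pos_of_ne_zero hd
    positivity
  linarith

private lemma roots_iter_bound {S : Polynomial ℂ} {c : ℝ} (hc : 0 ≤ c)
    (h : ∀ z ∈ S.roots, Complex.abs z ≤ c) (j : ℕ) :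
    ∀ z ∈ (derivative^[j] S).roots, Complex.abs z ≤ c := by
  induction j with
  | zero => exact h
  | succ j ih =>
    rw [Function.iterate_succ_apply']
    exact roots_deriv_bound hc ih

private lemma iter_ne_nd {S : Polynomial ℂ} (hS : S ≠ 0) :
    ∀ {j}, j ≤ S.natDegree →
      derivative^[j] S ≠ 0 ∧ (derivative^[j] S).natDegree = S.natDegree - j := by
  intro j
  induction j with
  | zero => intro _; exact ⟨hS, rfl⟩
  | succ j ih =>
    intro hj
    obtain ⟨h1, h2⟩ := ih (Nat.le_of_succ_le hj)
    set P := derivative^[j] S with hPdef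
    have hm1 : 1 ≤ P.natDegree := by omega
    have hco : (derivative P).coeff (P.natDegree - 1) ≠ 0 := by
      rw [coeff_derivative]
      have : P.natDegree - 1 + 1 = P.natDegree := by omega
      rw [this]
      apply mul_ne_zero
      · exact leadingCoeff_ne_zero.mpr h1
      · intro hcon
        exact absurd (by exact_mod_cast hcon : (P.natDegree - 1 + 1 : ℕ) = 0)
          (Nat.succ_ne_zero _)
    have hne : derivative P ≠ 0 := fun h => hco (by rw [h]; simp)
    have hge : P.natDegree - 1 ≤ (derivative P).natDegree := le_natDegree_of_ne_zero hco
    have hle : (derivative P).natDegree ≤ P.natDegree - 1 := natDegree_derivative_le P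
    constructor
    · rw [Function.iterate_succ_apply']; exact hne
    · rw [Function.iterate_succ_apply', ← hPdef]
      omega

private lemma chain_step {S : Polynomial ℂ} (hS : S ≠ 0) {w : ℂ} (hw : w ≠ 0)
    (hroots : ∀ z ∈ S.roots, Complex.abs z ≤ Complex.abs w) {j m : ℕ}
    (hj : j < S.natDegree) (hm : 1 ≤ m) (hmle : m ≤ S.natDegree - j) :
    Complex.abs (eval w (derivative^[j] S))
      ≤ (2 * Complex.abs w / m) * Complex.abs (eval w (derivative^[j+1] S)) := by
  obtain ⟨hP, hnd⟩ := iter_ne_nd hS hj.le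
  set P := derivative^[j] S with hPdef
  have hwpos : 0 < Complex.abs w := Complex.abs.pos hw
  have hmpos : (0:ℝ) < m := by exact_mod_cast hm
  by_cases hev : eval w P = 0
  · rw [hev]
    simp only [map_zero]
    positivity
  · have hrr : ∀ z ∈ P.roots, Complex.abs z ≤ Complex.abs w :=
      roots_iter_bound (Complex.abs.nonneg w) hroots j
    have hrat := ratio hP hw hrr hev
    rw [Function.iterate_succ_apply', ← hPdef]
    have hnd' : (m:ℝ) ≤ (P.natDegree : ℝ) := by
      rw [hnd]; exact_mod_cast hmle
    set X := Complex.abs (eval w P)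
    set Y := Complex.abs (eval w (derivative P))
    have hXpos : 0 < X := Complex.abs.pos hev
    have hkey : (m:ℝ) * X ≤ 2 * Complex.abs w * Y := by
      rw [div_mul_eq_mul_div, div_le_iff₀ (by positivity : (0:ℝ) < 2 * Complex.abs w)] at hrat
      nlinarith
    rw [div_mul_eq_mul_div, le_div_iff₀ hmpos]
    linarith

private lemma chain_iter {S : Polynomial ℂ} (hS : S ≠ 0) {w : ℂ} (hw : w ≠ 0)
    (hroots : ∀ z ∈ S.roots, Complex.abs z ≤ Complex.abs w) {kk : ℕ}
    (hkk : kk ≤ S.natDegree) :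
    ∀ d i, i + d = kk →
      Complex.abs (eval w (derivative^[i] S))
        ≤ (2 * Complex.abs w / (S.natDegree - kk + 1 : ℕ))^d
            * Complex.abs (eval w (derivative^[kk] S)) := by
  intro d
  induction d with
  | zero =>
    intro i hi
    rw [Nat.add_zero] at hi
    subst hi
    simp
  | succ d ih =>
    intro i hi
    have hik : i < kk := by omega
    have hstep := chain_step hS hw hroots (j := i) (m := S.natDegree - kk + 1)
      (by omega) (by omega) (by omega)
    have hih := ih (i+1) (by omega)
    have hc : (0:ℝ) ≤ 2 * Complex.abs w / (S.natDegree - kk + 1 : ℕ) := by positivity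
    calc Complex.abs (eval w (derivative^[i] S))
        ≤ (2 * Complex.abs w / (S.natDegree - kk + 1 : ℕ))
            * Complex.abs (eval w (derivative^[i+1] S)) := hstep
      _ ≤ (2 * Complex.abs w / (S.natDegree - kk + 1 : ℕ))
            * ((2 * Complex.abs w / (S.natDegree - kk + 1 : ℕ))^d
                * Complex.abs (eval w (derivative^[kk] S))) :=
          mul_le_mul_of_nonneg_left hih hc
      _ = (2 * Complex.abs w / (S.natDegree - kk + 1 : ℕ))^(d+1)
            * Complex.abs (eval w (derivative^[kk] S)) := by ring

private lemma it_add (d : ℕ) (p q : Polynomial ℂ) :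
    derivative^[d] (p + q) = derivative^[d] p + derivative^[d] q := by
  induction d generalizing p q with
  | zero => rfl
  | succ d ih =>
    simp only [Function.iterate_succ_apply, derivative_add]
    exact ih _ _

private lemma it_zero (d : ℕ) : derivative^[d] (0 : Polynomial ℂ) = 0 := by
  induction d with
  | zero => rfl
  | succ d ih => simp only [Function.iterate_succ_apply, derivative_zero, ih]

private lemma it_sum {ι : Type*} (d : ℕ) (s : Finset ι) (f : ι → Polynomial ℂ) :
    derivative^[d] (∑ i ∈ s, f i) = ∑ i ∈ s, derivative^[d] (f i) := by
  classical
  induction s using Finset.induction_on with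
  | empty => simp [it_zero]
  | insert x s hx ih => rw [Finset.sum_insert hx, Finset.sum_insert hx, it_add, ih]

private lemma high_mult {k : ℕ} (hk : 1 ≤ k) (Q : ℕ → Polynomial ℂ)
    (V S : Polynomial ℂ) (hS : S ≠ 0)
    (hE : ∑ i ∈ Finset.Icc 1 k, Q i * (derivative^[i] S) + V * S = 0) {z : ℂ}
    (h0 : ∀ j ≤ k, eval z (derivative^[j] S) = 0) : eval z (Q k) = 0 := by
  have hex : ∃ j, eval z (derivative^[j] S) ≠ 0 := by
    refine ⟨S.natDegree, ?_⟩
    obtain ⟨h1, h2⟩ := iter_ne_nd hS (le_refl S.natDegree)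
    rw [Nat.sub_self] at h2
    rw [eq_C_of_natDegree_eq_zero h2]
    simp only [eval_C]
    intro hco
    apply h1
    rw [eq_C_of_natDegree_eq_zero h2, hco, map_zero]
  classical
  set t := Nat.find hex with htdef
  have ht : eval z (derivative^[t] S) ≠ 0 := Nat.find_spec hex
  have hmin : ∀ j < t, eval z (derivative^[j] S) = 0 := by
    intro j hj
    rw [htdef] at hj
    exact not_not.mp (Nat.find_min hex hj)
  have hkt : k < t := by
    by_contra hcon
    push_neg at hcon
    exact ht (h0 t hcon)
  set d := t - k with hddef
  have hdk : d + k = t := by omega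
  -- claim0
  have claim0 : ∀ i ≤ k, ∀ l ≤ d, (i ≠ k ∨ l ≠ d) →
      eval z (derivative^[l] (derivative^[i] S)) = 0 := by
    intro i hi l hl hor
    rw [← Function.iterate_add_apply]
    apply hmin
    omega
  have hDE : eval z (derivative^[d]
      (∑ i ∈ Finset.Icc 1 k, Q i * (derivative^[i] S) + V * S)) = 0 := by
    rw [hE, it_zero]; simp
  rw [it_add, it_sum] at hDE
  have hVS : eval z (derivative^[d] (V * S)) = 0 := by
    rw [iterate_derivative_mul]
    rw [eval_finset_sum]
    apply Finset.sum_eq_zero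
    intro l hl
    rw [Finset.mem_range] at hl
    have hlt : l < t := by omega
    rw [eval_smul, smul_eq_zero]
    right
    rw [eval_mul, hmin l hlt, mul_zero]
  have hsum : ∑ i ∈ Finset.Icc 1 k, eval z (derivative^[d] (Q i * derivative^[i] S))
      = eval z (Q k) * eval z (derivative^[t] S) := by
    rw [Finset.sum_eq_single k]
    · rw [iterate_derivative_mul, eval_finset_sum, Finset.sum_range_succ]
      have hzero : ∀ l ∈ Finset.range d,
          eval z (Nat.choose d l • (derivative^[d - l] (Q k) * derivative^[l] (derivative^[k] S))) = 0 := by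
        intro l hl
        rw [Finset.mem_range] at hl
        rw [eval_smul, smul_eq_zero]
        right
        rw [eval_mul, claim0 k le_rfl l hl.le (Or.inr (by omega)), mul_zero]
      rw [Finset.sum_eq_zero hzero, zero_add]
      rw [Nat.choose_self, one_smul, Nat.sub_self, eval_mul]
      rw [Function.iterate_zero_apply, ← Function.iterate_add_apply, hdk]
    · intro i hi hik
      rw [Finset.mem_Icc] at hi
      rw [iterate_derivative_mul, eval_finset_sum]
      apply Finset.sum_eq_zero
      intro l hl
      rw [Finset.mem_range] at hl
      rw [eval_smul, smul_eq_zero]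
      right
      rw [eval_mul, claim0 i hi.2 l (by omega) (Or.inl hik), mul_zero]
    · intro hcon
      exact absurd (Finset.mem_Icc.mpr ⟨hk, le_rfl⟩) hcon
  rw [eval_add, eval_finset_sum, hsum, hVS, add_zero] at hDE
  exact (mul_eq_zero.mp hDE).resolve_right ht

private lemma eval_abs_le {Q : Polynomial ℂ} {D : ℕ} (hD : Q.degree ≤ (D:ℕ)) {w : ℂ}
    (hw : 1 ≤ Complex.abs w) :
    Complex.abs (eval w Q) ≤ (∑ j ∈ Finset.range (D+1), Complex.abs (Q.coeff j))
      * Complex.abs w ^ D := by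
  have hnd : Q.natDegree < D + 1 := Nat.lt_succ_of_le (natDegree_le_iff_degree_le.mpr hD)
  rw [eval_eq_sum_range' hnd]
  calc Complex.abs (∑ i ∈ Finset.range (D+1), Q.coeff i * w ^ i)
      ≤ ∑ i ∈ Finset.range (D+1), Complex.abs (Q.coeff i * w ^ i) :=
        Complex.abs.sum_le _ _
    _ ≤ ∑ i ∈ Finset.range (D+1), Complex.abs (Q.coeff i) * Complex.abs w ^ D := by
        apply Finset.sum_le_sum
        intro i hi
        rw [Finset.mem_range] at hi
        rw [map_mul, map_pow]
        apply mul_le_mul_of_nonneg_left _ (Complex.abs.nonneg _)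
        exact pow_le_pow_right₀ hw (by omega)
    _ = (∑ j ∈ Finset.range (D+1), Complex.abs (Q.coeff j)) * Complex.abs w ^ D := by
        rw [← Finset.sum_mul]

private lemma lower_bound {P : Polynomial ℂ} {D : ℕ} (hD1 : 1 ≤ D)
    (hdeg : P.degree = (D:ℕ)) {w : ℂ} (hw1 : 1 ≤ Complex.abs w)
    (hw2 : 2 * (∑ j ∈ Finset.range D, Complex.abs (P.eraseLead.coeff j))
        / Complex.abs P.leadingCoeff ≤ Complex.abs w) :
    Complex.abs P.leadingCoeff / 2 * Complex.abs w ^ D ≤ Complex.abs (eval w P) := by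
  have hP : P ≠ 0 := fun h => by rw [h] at hdeg; simp at hdeg
  have hnd : P.natDegree = D := natDegree_eq_of_degree_eq_some hdeg
  set q := P.leadingCoeff with hq
  have hq0 : q ≠ 0 := leadingCoeff_ne_zero.mpr hP
  have hqpos : 0 < Complex.abs q := Complex.abs.pos hq0
  set T := P.eraseLead with hT
  have hTeq : P = C q * X ^ D + T := by
    rw [← hnd]
    have := P.self_sub_C_mul_X_pow
    rw [hT]
    linear_combination this
  have hTdeg : T.degree ≤ ((D - 1 : ℕ) : WithBot ℕ) := by
    apply le_trans degree_le_natDegree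
    exact_mod_cast le_trans (eraseLead_natDegree_le P) (by omega)
  set Bt := ∑ j ∈ Finset.range D, Complex.abs (T.coeff j) with hBt
  have hBtnn : 0 ≤ Bt := Finset.sum_nonneg fun _ _ => Complex.abs.nonneg _
  have hTbound : Complex.abs (eval w T) ≤ Bt * Complex.abs w ^ (D-1) := by
    have := eval_abs_le hTdeg hw1
    rwa [show D - 1 + 1 = D by omega] at this
  have hpowpos : (0:ℝ) < Complex.abs w ^ (D-1) := by positivity
  have hwpos : (0:ℝ) < Complex.abs w := by linarith
  have hpow : Complex.abs w ^ D = Complex.abs w * Complex.abs w ^ (D-1) := by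
    rw [← pow_succ']
    congr 1
    omega
  have htri : Complex.abs q * Complex.abs w ^ D
      - Complex.abs (eval w T) ≤ Complex.abs (eval w P) := by
    have h1 : eval w P = q * w ^ D + eval w T := by rw [hTeq]; simp
    have h2 := Complex.abs.add_le (q * w ^ D + eval w T) (-(eval w T))
    simp only [add_neg_cancel_right, AbsoluteValue.map_neg] at h2
    rw [h1]
    rw [map_mul, map_pow] at h2
    linarith
  have hq2 : Bt ≤ Complex.abs q * Complex.abs w / 2 := by
    rw [div_le_iff₀ hqpos] at hw2
    linarith
  have hmul : Bt * Complex.abs w ^ (D-1) ≤ (Complex.abs q * Complex.abs w / 2) * Complex.abs w ^ (D-1) :=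
    mul_le_mul_of_nonneg_right hq2 hpowpos.le
  have heq : (Complex.abs q * Complex.abs w / 2) * Complex.abs w ^ (D-1)
      = Complex.abs q / 2 * Complex.abs w ^ D := by
    rw [hpow]; ring
  linarith

private lemma root_le_sum {m : Multiset ℂ} {z : ℂ} (hz : z ∈ m) :
    Complex.abs z ≤ (m.map Complex.abs).sum := by
  rw [← Multiset.cons_erase hz, Multiset.map_cons, Multiset.sum_cons]
  have h0 : (0:ℝ) ≤ ((m.erase z).map Complex.abs).sum := by
    apply Multiset.sum_nonneg
    intro x hx
    obtain ⟨y, _, rfl⟩ := Multiset.mem_map.mp hx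
    exact Complex.abs.nonneg y
  linarith

theorem stmt_12 (k r : ℕ) (hk : 1 ≤ k) (Q : ℕ → Polynomial ℂ)
    (hdeg : ∀ i, 1 ≤ i → i ≤ k → (Q i).degree ≤ (i + r : ℕ))
    (hQk : (Q k).degree = (k + r : ℕ)) :
    ∃ (N₀ : ℕ) (R₀ : ℝ), 0 < R₀ ∧
      ∀ n ≥ N₀, ∀ V S : Polynomial ℂ, V.degree ≤ (r : ℕ) → S ≠ 0 →
        S.natDegree = n →
        ∑ i ∈ Finset.Icc 1 k, Q i * (Polynomial.derivative^[i] S) + V * S = 0 →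
        (∀ z ∈ V.roots, ‖z‖ ≤ R₀) ∧ (∀ z ∈ S.roots, ‖z‖ ≤ R₀) := by
  have hQkne : Q k ≠ 0 := by
    intro h
    have h2 : ((k + r : ℕ) : WithBot ℕ) = ⊥ := by rw [← hQk, h, degree_zero]
    exact absurd h2 (by simp)
  have hqpos : 0 < Complex.abs (Q k).leadingCoeff :=
    Complex.abs.pos (leadingCoeff_ne_zero.mpr hQkne)
  set q := Complex.abs (Q k).leadingCoeff with hqdef
  set Bt := ∑ j ∈ Finset.range (k+r), Complex.abs ((Q k).eraseLead.coeff j) with hBtdef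
  have hBtnn : 0 ≤ Bt := Finset.sum_nonneg fun _ _ => Complex.abs.nonneg _
  set Btot := ∑ i ∈ (Finset.Icc 1 k).erase k,
      (∑ j ∈ Finset.range ((i+r)+1), Complex.abs ((Q i).coeff j)) with hBtotdef
  have hBtotnn : 0 ≤ Btot :=
    Finset.sum_nonneg fun i _ => Finset.sum_nonneg fun _ _ => Complex.abs.nonneg _
  set RQ := ((Q k).roots.map Complex.abs).sum with hRQdef
  have hRQnn : 0 ≤ RQ := by
    apply Multiset.sum_nonneg
    intro x hx
    obtain ⟨y, _, rfl⟩ := Multiset.mem_map.mp hx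
    exact Complex.abs.nonneg y
  have hdivnn : 0 ≤ 2 * Bt / q := div_nonneg (by linarith) hqpos.le
  set R₀ := 1 + 2 * Bt / q + RQ with hR₀def
  have hR₀pos : 0 < R₀ := by rw [hR₀def]; linarith
  obtain ⟨N₁, hN₁⟩ := exists_nat_ge ((k:ℝ) + 4 * Btot / q)
  refine ⟨max N₁ (k+1), R₀, hR₀pos, ?_⟩
  intro n hn V S hV hS hnd hE
  subst hnd
  have hnk : k + 1 ≤ S.natDegree := le_trans (le_max_right _ _) hn
  have hnN1 : (N₁:ℝ) ≤ S.natDegree := Nat.cast_le.mpr (le_trans (le_max_left _ _) hn)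
  have hnB : 4 * Btot / q < (S.natDegree:ℝ) - k + 1 := by linarith
  have hkn : k ≤ S.natDegree := by omega
  -- the key contradiction
  have key : ∀ w : ℂ, R₀ < Complex.abs w → (∀ z ∈ S.roots, Complex.abs z ≤ Complex.abs w) →
      eval w V * eval w S = 0 → False := by
    intro w hwR hwroots hVS0
    have hw1 : 1 ≤ Complex.abs w := by
      have : (1:ℝ) ≤ R₀ := by rw [hR₀def]; linarith
      linarith
    have hw0 : w ≠ 0 := by
      intro h
      rw [h] at hwR
      simp at hwR
      linarith
    have hsum0 : ∑ i ∈ Finset.Icc 1 k, eval w (Q i) * eval w (derivative^[i] S) = 0 := by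
      have h1 := congrArg (eval w) hE
      rw [eval_add, eval_mul, eval_zero, eval_finset_sum] at h1
      simp only [eval_mul] at h1
      rw [hVS0, add_zero] at h1
      exact h1
    by_cases hSk : eval w (derivative^[k] S) = 0
    · -- high multiplicity case: w is a root of Q k
      have hall : ∀ j ≤ k, eval w (derivative^[j] S) = 0 := by
        intro j hj
        have h2 := chain_iter hS hw0 hwroots hkn (k - j) j (by omega)
        rw [hSk] at h2
        simp only [map_zero, mul_zero] at h2
        exact Complex.abs.eq_zero.mp (le_antisymm h2 (Complex.abs.nonneg _))
      have hQk0 : eval w (Q k) = 0 := high_mult hk Q V S hS hE hall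
      have hwin : w ∈ (Q k).roots := mem_roots'.mpr ⟨hQkne, hQk0⟩
      have hle : Complex.abs w ≤ RQ := root_le_sum hwin
      have : RQ < R₀ := by rw [hR₀def]; linarith
      linarith
    · -- main quantitative case
      have hSkpos : 0 < Complex.abs (eval w (derivative^[k] S)) := Complex.abs.pos hSk
      have hkmem : k ∈ Finset.Icc 1 k := Finset.mem_Icc.mpr ⟨hk, le_rfl⟩
      have hsplit : eval w (Q k) * eval w (derivative^[k] S)
          + ∑ i ∈ (Finset.Icc 1 k).erase k, eval w (Q i) * eval w (derivative^[i] S) = 0 := by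
        rw [← hsum0]
        exact Finset.add_sum_erase _ (fun i => eval w (Q i) * eval w (derivative^[i] S)) hkmem
      have htri : Complex.abs (eval w (Q k)) * Complex.abs (eval w (derivative^[k] S))
          ≤ ∑ i ∈ (Finset.Icc 1 k).erase k,
              Complex.abs (eval w (Q i)) * Complex.abs (eval w (derivative^[i] S)) := by
        have h3 : eval w (Q k) * eval w (derivative^[k] S)
            = -∑ i ∈ (Finset.Icc 1 k).erase k, eval w (Q i) * eval w (derivative^[i] S) := by
          linear_combination hsplit
        rw [← map_mul, h3, AbsoluteValue.map_neg]
        apply le_trans (Complex.abs.sum_le _ _)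
        apply le_of_eq
        exact Finset.sum_congr rfl fun i _ => map_mul _ _ _
      -- lower bound for Q k
      have hwBt : 2 * Bt / q ≤ Complex.abs w := by
        have h5 : 2 * Bt / q ≤ R₀ := by rw [hR₀def]; linarith
        exact h5.trans hwR.le
      have hlow : q / 2 * Complex.abs w ^ (k+r) ≤ Complex.abs (eval w (Q k)) :=
        lower_bound (by omega) hQk hw1 hwBt
      -- upper bound for each term
      set m : ℝ := ((S.natDegree - k + 1 : ℕ) : ℝ) with hmdef
      have hmcast : m = (S.natDegree:ℝ) - k + 1 := by
        rw [hmdef]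
        push_cast [Nat.cast_sub hkn]
        ring
      have hm2 : (2:ℝ) ≤ m := by
        have : ((k:ℝ) + 1) ≤ S.natDegree := by exact_mod_cast hnk
        rw [hmcast]; linarith
      have hmpos : (0:ℝ) < m := by linarith
      have hterm : ∀ i ∈ (Finset.Icc 1 k).erase k,
          Complex.abs (eval w (Q i)) * Complex.abs (eval w (derivative^[i] S))
            ≤ (∑ j ∈ Finset.range ((i+r)+1), Complex.abs ((Q i).coeff j)) * (2 / m)
                * (Complex.abs w ^ (k+r) * Complex.abs (eval w (derivative^[k] S))) := by
        intro i hi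
        rw [Finset.mem_erase, Finset.mem_Icc] at hi
        obtain ⟨hik, hi1, hik'⟩ := hi
        have h1 : Complex.abs (eval w (Q i))
            ≤ (∑ j ∈ Finset.range ((i+r)+1), Complex.abs ((Q i).coeff j))
                * Complex.abs w ^ (i+r) :=
          eval_abs_le (hdeg i hi1 hik') hw1
        have h2 := chain_iter hS hw0 hwroots hkn (k - i) i (by omega)
        have hcc : (2 * Complex.abs w / ((S.natDegree - k + 1 : ℕ):ℝ))
            = (2/m) * Complex.abs w := by rw [← hmdef]; ring
        rw [hcc, mul_pow] at h2
        have h3 : (2/m)^(k-i) ≤ 2/m := by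
          apply pow_le_of_le_one (div_nonneg (by norm_num) hmpos.le)
          · rw [div_le_one hmpos]; linarith
          · omega
        have hBinn : (0:ℝ) ≤ ∑ j ∈ Finset.range ((i+r)+1), Complex.abs ((Q i).coeff j) :=
          Finset.sum_nonneg fun _ _ => Complex.abs.nonneg _
        have hwposr : (0:ℝ) < Complex.abs w := by linarith
        calc Complex.abs (eval w (Q i)) * Complex.abs (eval w (derivative^[i] S))
            ≤ ((∑ j ∈ Finset.range ((i+r)+1), Complex.abs ((Q i).coeff j))
                  * Complex.abs w ^ (i+r))
                * ((2/m)^(k-i) * Complex.abs w ^ (k-i)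
                    * Complex.abs (eval w (derivative^[k] S))) := by
              exact mul_le_mul h1 h2 (Complex.abs.nonneg _) (mul_nonneg hBinn (pow_nonneg (Complex.abs.nonneg w) _))
          _ ≤ ((∑ j ∈ Finset.range ((i+r)+1), Complex.abs ((Q i).coeff j))
                  * Complex.abs w ^ (i+r))
                * ((2/m) * Complex.abs w ^ (k-i)
                    * Complex.abs (eval w (derivative^[k] S))) := by
              apply mul_le_mul_of_nonneg_left _
                (mul_nonneg hBinn (pow_nonneg (Complex.abs.nonneg w) _))
              apply mul_le_mul_of_nonneg_right _ (Complex.abs.nonneg _)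
              exact mul_le_mul_of_nonneg_right h3 (pow_nonneg (Complex.abs.nonneg w) _)
          _ = (∑ j ∈ Finset.range ((i+r)+1), Complex.abs ((Q i).coeff j)) * (2/m)
                * ((Complex.abs w ^ (i+r) * Complex.abs w ^ (k-i))
                    * Complex.abs (eval w (derivative^[k] S))) := by ring
          _ = (∑ j ∈ Finset.range ((i+r)+1), Complex.abs ((Q i).coeff j)) * (2/m)
                * (Complex.abs w ^ (k+r) * Complex.abs (eval w (derivative^[k] S))) := by
              rw [← pow_add, show (i+r)+(k-i) = k+r by omega]
      have hup : ∑ i ∈ (Finset.Icc 1 k).erase k,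
            Complex.abs (eval w (Q i)) * Complex.abs (eval w (derivative^[i] S))
          ≤ Btot * (2/m)
              * (Complex.abs w ^ (k+r) * Complex.abs (eval w (derivative^[k] S))) := by
        apply le_trans (Finset.sum_le_sum hterm)
        rw [hBtotdef, Finset.sum_mul, Finset.sum_mul]
      have hfinal : q/2 * (Complex.abs w ^ (k+r) * Complex.abs (eval w (derivative^[k] S)))
          ≤ Btot * (2/m)
              * (Complex.abs w ^ (k+r) * Complex.abs (eval w (derivative^[k] S))) := by
        calc q/2 * (Complex.abs w ^ (k+r) * Complex.abs (eval w (derivative^[k] S)))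
            = (q/2 * Complex.abs w ^ (k+r)) * Complex.abs (eval w (derivative^[k] S)) := by
              ring
          _ ≤ Complex.abs (eval w (Q k)) * Complex.abs (eval w (derivative^[k] S)) :=
              mul_le_mul_of_nonneg_right hlow hSkpos.le
          _ ≤ _ := htri
          _ ≤ _ := hup
      have hXpos : 0 < Complex.abs w ^ (k+r) * Complex.abs (eval w (derivative^[k] S)) := by
        have hwposr : (0:ℝ) < Complex.abs w := by linarith
        exact mul_pos (pow_pos hwposr _) hSkpos
      have h4 : 4 * Btot < m * q := by
        have h5 : 4 * Btot / q < m := by rw [hmcast]; exact hnB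
        rw [div_lt_iff₀ hqpos] at h5
        linarith
      have hq2 : Btot * (2/m) < q/2 := by
        rw [show Btot * (2/m) = 2*Btot/m by ring, div_lt_iff₀ hmpos]
        linarith
      linarith [mul_lt_mul_of_pos_right hq2 hXpos, hfinal]
  have hrootsS : ∀ z ∈ S.roots, Complex.abs z ≤ R₀ := by
    have hdegpos : 0 < S.degree := by
      rw [degree_eq_natDegree hS]
      exact_mod_cast (by omega : 0 < S.natDegree)
    obtain ⟨z1, hz1⟩ := Complex.exists_root hdegpos
    have hz1m : z1 ∈ S.roots := mem_roots'.mpr ⟨hS, hz1⟩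
    obtain ⟨z₀, hz₀mem, hz₀max⟩ := Finset.exists_max_image S.roots.toFinset Complex.abs
      ⟨z1, Multiset.mem_toFinset.mpr hz1m⟩
    have hz₀root : z₀ ∈ S.roots := Multiset.mem_toFinset.mp hz₀mem
    have hmax : ∀ z ∈ S.roots, Complex.abs z ≤ Complex.abs z₀ :=
      fun z hz => hz₀max z (Multiset.mem_toFinset.mpr hz)
    have hz₀le : Complex.abs z₀ ≤ R₀ := by
      by_contra hgt
      push_neg at hgt
      exact key z₀ hgt hmax (by rw [(mem_roots'.mp hz₀root).2, mul_zero])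
    exact fun z hz => (hmax z hz).trans hz₀le
  refine ⟨?_, hrootsS⟩
  intro z hz
  by_contra hgt
  push_neg at hgt
  exact key z hgt (fun ζ hζ => (hrootsS ζ hζ).trans hgt.le)
    (by rw [(mem_roots'.mp hz).2, zero_mul])
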